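/- Existence of very weak solutions (mild form): in the setting below, suppose that for each ε ∈ (0,1] a bounded linear operator B_ε on E satisfies the log-type bound ‖B_ε‖ ≤ N_q log(1/ε) for some constant N_q > 0, and that u_ε : [0,T] → E is a continuous mild solution with potential B_ε (with the same (T_s), f and g for all ε). Then the net (u_ε)_{ε∈(0,1]} is C([0,T];E)-moderate: there exist C > 0 and N ≥ 0 such that sup_{t ∈ [0,T]} ‖u_ε(t)‖_E ≤ C ε^{-N} for all ε ∈ (0,1]. -/

import Mathlib

open Set MeasureTheory

/-- Joint continuity of a strongly continuous, locally bounded operator family. -/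
lemma strong_cont_joint_cont
    {E : Type*} [NormedAddCommGroup E] [NormedSpace ℝ E]
    (T K : ℝ) (Tt : ℝ → E →L[ℝ] E)
    (hTcont : ∀ x : E, ContinuousOn (fun s => Tt s x) (Icc 0 T))
    (hTb : ∀ s ∈ Icc (0 : ℝ) T, ‖Tt s‖ ≤ K) :
    ContinuousOn (fun p : ℝ × E => Tt p.1 p.2) (Icc 0 T ×ˢ (univ : Set E)) := by
  rintro ⟨r₀, x₀⟩ ⟨hr₀, -⟩
  rw [ContinuousWithinAt, tendsto_iff_norm_sub_tendsto_zero]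
  have hfst : Filter.Tendsto (fun p : ℝ × E => p.1)
      (nhdsWithin (r₀, x₀) (Icc 0 T ×ˢ (univ : Set E))) (nhdsWithin r₀ (Icc 0 T)) := by
    rw [nhdsWithin_prod_eq]
    exact Filter.tendsto_fst
  have hsnd : Filter.Tendsto (fun p : ℝ × E => p.2)
      (nhdsWithin (r₀, x₀) (Icc 0 T ×ˢ (univ : Set E))) (nhds x₀) :=
    (continuous_snd.tendsto _).mono_left nhdsWithin_le_nhds
  have hA : Filter.Tendsto (fun p : ℝ × E => K * ‖p.2 - x₀‖)
      (nhdsWithin (r₀, x₀) (Icc 0 T ×ˢ (univ : Set E))) (nhds 0) := by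
    have : Filter.Tendsto (fun p : ℝ × E => ‖p.2 - x₀‖)
        (nhdsWithin (r₀, x₀) (Icc 0 T ×ˢ (univ : Set E))) (nhds 0) := by
      have := hsnd.sub_const x₀
      simpa using this.norm
    simpa using this.const_mul K
  have hB : Filter.Tendsto (fun p : ℝ × E => ‖Tt p.1 x₀ - Tt r₀ x₀‖)
      (nhdsWithin (r₀, x₀) (Icc 0 T ×ˢ (univ : Set E))) (nhds 0) := by
    have h1 : Filter.Tendsto (fun s => Tt s x₀) (nhdsWithin r₀ (Icc 0 T))
        (nhds (Tt r₀ x₀)) := hTcont x₀ r₀ hr₀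
    have := (tendsto_iff_norm_sub_tendsto_zero.mp h1).comp hfst
    exact this
  have hsum := hA.add hB
  rw [add_zero] at hsum
  refine squeeze_zero_norm' ?_ hsum
  filter_upwards [self_mem_nhdsWithin] with p hp
  obtain ⟨hp1, -⟩ := hp
  have key : ‖Tt p.1 p.2 - Tt r₀ x₀‖ ≤ K * ‖p.2 - x₀‖ + ‖Tt p.1 x₀ - Tt r₀ x₀‖ := by
    have h2 : Tt p.1 p.2 - Tt r₀ x₀ = Tt p.1 (p.2 - x₀) + (Tt p.1 x₀ - Tt r₀ x₀) := by
      simp only [map_sub]; abel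
    rw [h2]
    refine (norm_add_le _ _).trans ?_
    gcongr
    exact ((Tt p.1).le_opNorm _).trans
      (mul_le_mul_of_nonneg_right (hTb p.1 hp1) (norm_nonneg _))
  simpa [Real.norm_of_nonneg (norm_nonneg _)] using key

/-- existence of very weak solutions (mild form): if the potentials `B_ε`
satisfy the log-type bound `‖B_ε‖ ≤ N_q log(1/ε)` and `u_ε` are continuous mild
solutions with potentials `B_ε` (same semigroup `T_s`, force `f` and datum `g`), then
the net `(u_ε)` is `C([0,T];E)`-moderate:
`sup_{t∈[0,T]} ‖u_ε(t)‖ ≤ C ε^{-N}` for some `C > 0`, `N ≥ 0` and all `ε ∈ (0,1]`. -/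
theorem very_weak_solution_moderate
    {E : Type*} [NormedAddCommGroup E] [NormedSpace ℝ E] [CompleteSpace E]
    (T : ℝ) (hT : 0 < T) (M w : ℝ) (hM : 0 < M) (hw : 0 ≤ w)
    (Tt : ℝ → E →L[ℝ] E)
    (hTcont : ∀ x : E, ContinuousOn (fun s => Tt s x) (Icc 0 T))
    (hTbound : ∀ s ∈ Icc (0 : ℝ) T, ‖Tt s‖ ≤ M * Real.exp (w * s))
    (g : E) (f : ℝ → E) (hf : ContinuousOn f (Icc 0 T))
    (Bε : ℝ → E →L[ℝ] E) (Nq : ℝ) (hNq : 0 < Nq)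
    (hBlog : ∀ ε ∈ Ioc (0 : ℝ) 1, ‖Bε ε‖ ≤ Nq * Real.log (1 / ε))
    (uε : ℝ → ℝ → E)
    (huc : ∀ ε ∈ Ioc (0 : ℝ) 1, ContinuousOn (uε ε) (Icc 0 T))
    (humild : ∀ ε ∈ Ioc (0 : ℝ) 1, ∀ t ∈ Icc (0 : ℝ) T,
      uε ε t = Tt t g + ∫ s in (0 : ℝ)..t, Tt (t - s) (f s - Bε ε (uε ε s))) :
    ∃ C > (0 : ℝ), ∃ N : ℝ, 0 ≤ N ∧ ∀ ε ∈ Ioc (0 : ℝ) 1, ∀ t ∈ Icc (0 : ℝ) T,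
      ‖uε ε t‖ ≤ C * ε ^ (-N) := by
  -- bound for `f`
  obtain ⟨F0, hF0⟩ := isCompact_Icc.exists_bound_of_continuousOn hf
  set F := max F0 0 with hFdef
  have hFnn : (0 : ℝ) ≤ F := le_max_right _ _
  have hFb : ∀ s ∈ Icc (0 : ℝ) T, ‖f s‖ ≤ F := fun s hs =>
    (hF0 s hs).trans (le_max_left _ _)
  -- uniform bound for the semigroup
  set K := M * Real.exp (w * T) with hKdef
  have hKpos : 0 < K := mul_pos hM (Real.exp_pos _)
  have hTb : ∀ s ∈ Icc (0 : ℝ) T, ‖Tt s‖ ≤ K := by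
    intro s hs
    refine (hTbound s hs).trans ?_
    have : w * s ≤ w * T := mul_le_mul_of_nonneg_left hs.2 hw
    exact mul_le_mul_of_nonneg_left (Real.exp_le_exp.mpr this) hM.le
  have hjoint := strong_cont_joint_cont T K Tt hTcont hTb
  set a : ℝ := K * ‖g‖ + K * F * T + 1 with hadef
  have hapos : 0 < a := by positivity
  refine ⟨a, hapos, K * Nq * T, by positivity, ?_⟩
  intro ε hε
  have hε0 : (0 : ℝ) < ε := hε.1
  have hL : 0 ≤ Real.log (1 / ε) := by
    apply Real.log_nonneg
    rw [le_div_iff₀ hε0, one_mul]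
    exact hε.2
  set b := K * (Nq * Real.log (1 / ε)) with hbdef
  have hbnn : 0 ≤ b := by positivity
  set u := uε ε with hudef
  have hu : ContinuousOn u (Icc 0 T) := huc ε hε
  -- continuous extension of `‖u ·‖` to all of `ℝ`
  set proj : ℝ → ℝ := fun s => max 0 (min s T) with hprojdef
  have hprojmem : ∀ s, proj s ∈ Icc (0 : ℝ) T := fun s =>
    ⟨le_max_left _ _, max_le hT.le (min_le_right _ _)⟩
  have hprojeq : ∀ s ∈ Icc (0 : ℝ) T, proj s = s := by
    intro s hs
    simp only [hprojdef]
    rw [min_eq_left hs.2, max_eq_right hs.1]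
  have hprojc : Continuous proj := continuous_const.max (continuous_id.min continuous_const)
  set ψ : ℝ → ℝ := fun s => ‖u (proj s)‖ with hψdef
  have hψc : Continuous ψ := continuous_norm.comp (hu.comp_continuous hprojc hprojmem)
  have hψnn : ∀ s, 0 ≤ ψ s := fun s => norm_nonneg _
  have hψeq : ∀ s ∈ Icc (0 : ℝ) T, ψ s = ‖u s‖ := by
    intro s hs; simp only [hψdef]; rw [hprojeq s hs]
  set φ : ℝ → ℝ := fun x => ∫ s in (0 : ℝ)..x, ψ s with hφdef
  have hφd : ∀ x : ℝ, HasDerivAt φ (ψ x) x := fun x =>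
    (hψc.integral_hasStrictDerivAt 0 x).hasDerivAt
  have hφc : Continuous φ := by
    rw [continuous_iff_continuousAt]
    exact fun x => (hφd x).continuousAt
  have hφnn : ∀ x ∈ Icc (0 : ℝ) T, 0 ≤ φ x := fun x hx =>
    intervalIntegral.integral_nonneg hx.1 (fun s _ => hψnn s)
  -- key integral inequality
  have key : ∀ t ∈ Icc (0 : ℝ) T, ψ t ≤ a + b * φ t := by
    intro t ht
    have ht0 : (0 : ℝ) ≤ t := ht.1
    set G : ℝ → E := fun s => Tt (t - s) (f s - Bε ε (u s)) with hGdef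
    have hsub : Icc (0 : ℝ) t ⊆ Icc (0 : ℝ) T := Icc_subset_Icc le_rfl ht.2
    have hGc : ContinuousOn G (Icc 0 t) := by
      have hin : ContinuousOn (fun s => ((t - s : ℝ), f s - Bε ε (u s))) (Icc 0 t) := by
        refine ContinuousOn.prodMk ?_ ?_
        · exact (continuous_const.sub continuous_id).continuousOn
        · exact (hf.mono hsub).sub
            ((Bε ε).continuous.comp_continuousOn (hu.mono hsub))
      have hmaps : MapsTo (fun s => ((t - s : ℝ), f s - Bε ε (u s)))
          (Icc 0 t) (Icc 0 T ×ˢ (univ : Set E)) := by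
        intro s hs
        refine ⟨⟨?_, ?_⟩, mem_univ _⟩
        · show (0:ℝ) ≤ t - s; linarith [hs.2]
        · show t - s ≤ T; linarith [hs.1, ht.2]
      exact hjoint.comp hin hmaps
    have hGi : IntervalIntegrable G volume 0 t := by
      apply ContinuousOn.intervalIntegrable
      rwa [uIcc_of_le ht0]
    have hGbound : ∀ s ∈ Icc (0 : ℝ) t, ‖G s‖ ≤ K * F + b * ψ s := by
      intro s hs
      have hsT : s ∈ Icc (0 : ℝ) T := hsub hs
      have htsT : t - s ∈ Icc (0 : ℝ) T := ⟨by linarith [hs.2], by linarith [hs.1, ht.2]⟩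
      have h1 : ‖G s‖ ≤ K * ‖f s - Bε ε (u s)‖ :=
        ((Tt (t - s)).le_opNorm _).trans
          (mul_le_mul_of_nonneg_right (hTb _ htsT) (norm_nonneg _))
      have h2 : ‖f s - Bε ε (u s)‖ ≤ F + Nq * Real.log (1 / ε) * ‖u s‖ := by
        refine (norm_sub_le _ _).trans ?_
        gcongr
        · exact hFb s hsT
        · exact ((Bε ε).le_opNorm _).trans
            (mul_le_mul_of_nonneg_right (hBlog ε hε) (norm_nonneg _))
      have h3 : ψ s = ‖u s‖ := hψeq s hsT
      calc ‖G s‖ ≤ K * (F + Nq * Real.log (1 / ε) * ‖u s‖) :=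
            h1.trans (mul_le_mul_of_nonneg_left h2 hKpos.le)
        _ = K * F + b * ψ s := by rw [h3, hbdef]; ring
    have hRHSi : IntervalIntegrable (fun s => K * F + b * ψ s) volume 0 t :=
      (continuous_const.add (continuous_const.mul hψc)).intervalIntegrable _ _
    have hint : ‖∫ s in (0 : ℝ)..t, G s‖ ≤ K * F * t + b * φ t := by
      refine (intervalIntegral.norm_integral_le_integral_norm ht0).trans ?_
      have := intervalIntegral.integral_mono_on ht0 hGi.norm hRHSi hGbound
      refine this.trans ?_
      rw [intervalIntegral.integral_add (f := fun _ => K * F) (g := fun s => b * ψ s)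
        (intervalIntegrable_const)
        ((continuous_const.mul hψc).intervalIntegrable _ _),
        intervalIntegral.integral_const,
        intervalIntegral.integral_const_mul]
      simp only [hφdef, smul_eq_mul]
      ring_nf
      exact le_rfl
    have hTtg : ‖Tt t g‖ ≤ K * ‖g‖ :=
      ((Tt t).le_opNorm _).trans (mul_le_mul_of_nonneg_right (hTb t ht) (norm_nonneg _))
    have hmild := humild ε hε t ht
    have hnu : ‖u t‖ ≤ K * ‖g‖ + (K * F * t + b * φ t) := by
      rw [hudef, hmild]
      exact (norm_add_le _ _).trans (add_le_add hTtg hint)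
    have hKFt : K * F * t ≤ K * F * T := by
      have : 0 ≤ K * F := by positivity
      exact mul_le_mul_of_nonneg_left ht.2 this
    rw [hψeq t ht]
    calc ‖u t‖ ≤ K * ‖g‖ + (K * F * t + b * φ t) := hnu
      _ ≤ a + b * φ t := by rw [hadef]; linarith
  -- Grönwall
  have gr : ∀ x ∈ Icc (0 : ℝ) T, ‖φ x‖ ≤ gronwallBound 0 b a (x - 0) := by
    refine norm_le_gronwallBound_of_norm_deriv_right_le hφc.continuousOn
      (fun x _ => (hφd x).hasDerivWithinAt) ?_ ?_
    · simp [hφdef]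
    · intro x hx
      have hx' : x ∈ Icc (0 : ℝ) T := ⟨hx.1, hx.2.le⟩
      rw [Real.norm_of_nonneg (hψnn x), Real.norm_of_nonneg (hφnn x hx')]
      linarith [key x hx']
  intro t ht
  have hφb : φ t ≤ gronwallBound 0 b a (t - 0) :=
    (le_abs_self _).trans (by simpa [Real.norm_eq_abs] using gr t ht)
  have hfinal : ψ t ≤ a * Real.exp (b * T) := by
    refine (key t ht).trans ?_
    have hb1 : a + b * φ t ≤ a + b * gronwallBound 0 b a (t - 0) := by
      have := mul_le_mul_of_nonneg_left hφb hbnn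
      linarith
    refine hb1.trans ?_
    rcases eq_or_lt_of_le hbnn with hb0 | hbpos
    · rw [← hb0]
      simp only [gronwallBound_K0, zero_mul, mul_zero, add_zero, zero_add]
      exact le_mul_of_one_le_right hapos.le (Real.one_le_exp (by nlinarith [ht.2]))
    · rw [gronwallBound_of_K_ne_0 (ne_of_gt hbpos)]
      have hsimp : a + b * ((0 : ℝ) * Real.exp (b * (t - 0)) + a / b * (Real.exp (b * (t - 0)) - 1))
          = a * Real.exp (b * t) := by
        field_simp
        ring
      rw [hsimp]
      have : Real.exp (b * t) ≤ Real.exp (b * T) :=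
        Real.exp_le_exp.mpr (mul_le_mul_of_nonneg_left ht.2 hbnn)
      exact mul_le_mul_of_nonneg_left this hapos.le
  have hrpow : a * Real.exp (b * T) = a * ε ^ (-(K * Nq * T)) := by
    rw [Real.rpow_def_of_pos hε0]
    congr 1
    rw [hbdef, Real.log_div one_ne_zero (ne_of_gt hε0), Real.log_one]
    ring
  rw [← hrpow]
  calc ‖uε ε t‖ = ψ t := (hψeq t ht).symm
    _ ≤ a * Real.exp (b * T) := hfinal
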